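/- For the exponential fading model, E[(z1 − z2)²·1{z1 ≥ z2}] = 2/(1+γ) and E[(z1² − z2²)·1{z1 ≥ z2}] = 2(1+2γ)/(1+γ)². -/

import Mathlib

open MeasureTheory ProbabilityTheory Filter Set
open scoped ENNReal NNReal

namespace ExpFadingAux


lemma integrableOn_pow_mul_exp (n : ℕ) {c : ℝ} (hc : 0 < c) :
    IntegrableOn (fun x : ℝ => x ^ n * Real.exp (-(c * x))) (Ioi 0) := by
  have h := integrableOn_rpow_mul_exp_neg_mul_rpow (p := 1) (s := n) (b := c)
    (lt_of_lt_of_le (by norm_num) (Nat.cast_nonneg n)) one_pos hc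
  refine h.congr_fun (fun x hx => ?_) measurableSet_Ioi
  dsimp only
  rw [Real.rpow_one, Real.rpow_natCast, neg_mul]

lemma integral_pow_mul_exp (n : ℕ) {c : ℝ} (hc : 0 < c) :
    ∫ x in Ioi (0:ℝ), x ^ n * Real.exp (-(c * x)) = (Nat.factorial n : ℝ) / c ^ (n + 1) := by
  have h := Real.integral_rpow_mul_exp_neg_mul_Ioi (a := n + 1) (r := c) (by positivity) hc
  rw [show ((n : ℝ) + 1 - 1) = (n : ℝ) by ring] at h
  rw [show (∫ x in Ioi (0:ℝ), x ^ n * Real.exp (-(c * x)))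
      = ∫ x in Ioi (0:ℝ), x ^ (n : ℝ) * Real.exp (-(c * x)) from
    setIntegral_congr_fun measurableSet_Ioi (fun x _ => by rw [Real.rpow_natCast]), h,
    Real.Gamma_nat_eq_factorial,
    show ((n : ℝ) + 1) = ((n + 1 : ℕ) : ℝ) by push_cast; ring,
    Real.rpow_natCast, div_pow, one_pow]
  field_simp

lemma map_restrict_Ioi (y : ℝ) :
    (volume.restrict (Ioi (0:ℝ))).map (fun x => x + y) = volume.restrict (Ioi y) := by
  have h := Measure.restrict_map (μ := volume) (measurable_add_const y) (measurableSet_Ioi (a := y))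
  have hpre : (fun x : ℝ => x + y) ⁻¹' Ioi y = Ioi 0 := by
    ext x; simp [lt_add_iff_pos_left]
  rw [hpre, map_add_right_eq_self volume y] at h
  exact h.symm

lemma emb_add (y : ℝ) : MeasurableEmbedding (fun x : ℝ => x + y) :=
  (MeasurableEquiv.addRight y).measurableEmbedding

lemma integral_Ioi_shift (g : ℝ → ℝ) (y : ℝ) :
    (∫ x in Ioi y, g x) = ∫ x in Ioi (0:ℝ), g (x + y) := by
  rw [← map_restrict_Ioi y, (emb_add y).integral_map]

lemma integrableOn_Ioi_shift {g : ℝ → ℝ} {y : ℝ}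
    (h : IntegrableOn (fun x => g (x + y)) (Ioi (0:ℝ))) : IntegrableOn g (Ioi y) := by
  rw [IntegrableOn, ← map_restrict_Ioi y, (emb_add y).integrable_map_iff]
  exact h

lemma lintegral_expMeasure {r : ℝ} (g : ℝ → ℝ≥0∞) (hg : Measurable g) :
    ∫⁻ x, g x ∂(expMeasure r)
      = ∫⁻ x in Ioi (0:ℝ), ENNReal.ofReal (r * Real.exp (-(r * x))) * g x := by
  rw [expMeasure, gammaMeasure,
    lintegral_withDensity_eq_lintegral_mul _
      (show Measurable (gammaPDF 1 r) from (measurable_gammaPDFReal 1 r).ennreal_ofReal) hg]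
  rw [← lintegral_add_compl (fun a => (gammaPDF 1 r * g) a) (measurableSet_Ioi (a := (0:ℝ)))]
  have h2 : ∫⁻ x in (Ioi (0:ℝ))ᶜ, (gammaPDF 1 r * g) x = 0 := by
    rw [compl_Ioi, ← Measure.restrict_congr_set Iio_ae_eq_Iic]
    rw [setLIntegral_congr_fun_ae (g := fun _ => 0) measurableSet_Iio
      (ae_of_all _ (fun x (hx : x < 0) => by
        simp [Pi.mul_apply, gammaPDF_of_neg hx])), lintegral_zero]
  rw [h2, add_zero]
  refine setLIntegral_congr_fun_ae measurableSet_Ioi (ae_of_all _ (fun x hx => ?_))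
  have : gammaPDF 1 r x = ENNReal.ofReal (r * Real.exp (-(r * x))) := by
    rw [show gammaPDF 1 r x = exponentialPDF r x from rfl,
      exponentialPDF_of_nonneg (le_of_lt hx)]
  simp [Pi.mul_apply, this]


lemma expMeasure_Iio (r : ℝ) : expMeasure r (Iio 0) = 0 := by
  rw [expMeasure, gammaMeasure, withDensity_apply _ measurableSet_Iio]
  exact lintegral_gammaPDF_of_nonpos le_rfl

lemma reduce {Ω : Type*} [MeasurableSpace Ω] (μ : Measure Ω) [IsProbabilityMeasure μ]
    (z1 z2 : Ω → ℝ) (hz1m : Measurable z1) (hz2m : Measurable z2)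
    (hindep : IndepFun z1 z2 μ)
    (γ : ℝ) (hγ : 0 < γ)
    (hz1law : μ.map z1 = expMeasure 1)
    (hz2law : μ.map z2 = expMeasure γ⁻¹)
    (f : ℝ × ℝ → ℝ) (hfm : Measurable f)
    (hnn : ∀ x y : ℝ, 0 ≤ x → 0 ≤ y → 0 ≤ f (x, y)) :
    ∫ ω, f (z1 ω, z2 ω) ∂μ
      = (∫⁻ y in Ioi (0:ℝ), ENNReal.ofReal (γ⁻¹ * Real.exp (-(γ⁻¹ * y))) *
          ∫⁻ x in Ioi (0:ℝ), ENNReal.ofReal (1 * Real.exp (-(1 * x))) *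
            ENNReal.ofReal (f (x, y))).toReal := by
  have hγi : (0:ℝ) < γ⁻¹ := by positivity
  haveI : IsProbabilityMeasure (expMeasure (1:ℝ)) := isProbabilityMeasure_expMeasure one_pos
  haveI : IsProbabilityMeasure (expMeasure γ⁻¹) := isProbabilityMeasure_expMeasure hγi
  set ν : Measure (ℝ × ℝ) := (expMeasure 1).prod (expMeasure γ⁻¹) with hν
  have hpair : Measurable (fun ω => (z1 ω, z2 ω)) := hz1m.prodMk hz2m
  have hmap : μ.map (fun ω => (z1 ω, z2 ω)) = ν := by
    rw [hν, ← hz1law, ← hz2law]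
    exact (indepFun_iff_map_prod_eq_prod_map_map hz1m.aemeasurable hz2m.aemeasurable).mp hindep
  have hae : ∀ᵐ p ∂ν, 0 ≤ f p := by
    have h1 : ν ((Iio 0) ×ˢ (univ : Set ℝ)) = 0 := by
      rw [hν, Measure.prod_prod, expMeasure_Iio]; simp
    have h2 : ν ((univ : Set ℝ) ×ˢ (Iio 0)) = 0 := by
      rw [hν, Measure.prod_prod, expMeasure_Iio]; simp
    rw [ae_iff]
    refine measure_mono_null (fun p hp => ?_) (measure_union_null h1 h2)
    simp only [mem_setOf_eq, not_le] at hp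
    by_contra hmem
    simp only [mem_union, mem_prod, mem_Iio, mem_univ, and_true, true_and, not_or, not_lt] at hmem
    exact absurd (hnn p.1 p.2 hmem.1 hmem.2) (not_le.mpr hp)
  have h1 : ∫ ω, f (z1 ω, z2 ω) ∂μ = ∫ p, f p ∂ν := by
    rw [← hmap, integral_map hpair.aemeasurable hfm.aestronglyMeasurable]
  rw [h1, integral_eq_lintegral_of_nonneg_ae hae hfm.aestronglyMeasurable]
  congr 1
  rw [hν, lintegral_prod_symm _ hfm.ennreal_ofReal.aemeasurable]
  have hinner : ∀ y : ℝ, (∫⁻ x, ENNReal.ofReal (f (x, y)) ∂(expMeasure 1))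
      = ∫⁻ x in Ioi (0:ℝ), ENNReal.ofReal (1 * Real.exp (-(1 * x))) * ENNReal.ofReal (f (x, y)) :=
    fun y => lintegral_expMeasure _ (hfm.comp (measurable_id.prodMk measurable_const)).ennreal_ofReal
  rw [lintegral_congr hinner]
  refine lintegral_expMeasure _ ?_
  apply Measurable.lintegral_prod_left
  have hm : Measurable (fun p : ℝ × ℝ =>
      ENNReal.ofReal (1 * Real.exp (-(1 * p.1))) * ENNReal.ofReal (f p)) :=
    ((measurable_const.mul (Real.measurable_exp.comp
      (measurable_const.mul measurable_fst).neg)).ennreal_ofReal).mul hfm.ennreal_ofReal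
  exact hm


lemma inner1 {y : ℝ} (hy : 0 < y) :
    (∫⁻ x in Ioi (0:ℝ), ENNReal.ofReal (1 * Real.exp (-(1 * x))) *
        ENNReal.ofReal (if y ≤ x then (x - y) ^ 2 else 0))
      = ENNReal.ofReal (2 * Real.exp (-y)) := by
  have step1 : (fun x : ℝ => ENNReal.ofReal (1 * Real.exp (-(1 * x))) *
      ENNReal.ofReal (if y ≤ x then (x - y) ^ 2 else 0))
      = (Ici y).indicator (fun x => ENNReal.ofReal (Real.exp (-x) * (x - y) ^ 2)) := by
    funext x
    by_cases h : y ≤ x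
    · simp only [indicator_of_mem (mem_Ici.2 h), if_pos h, one_mul]
      rw [← ENNReal.ofReal_mul (Real.exp_pos _).le]
    · simp [indicator_of_notMem, h, mem_Ici]
  have hIci : Ici y ∩ Ioi (0:ℝ) = Ici y :=
    inter_eq_left.mpr (fun x hx => lt_of_lt_of_le hy (mem_Ici.mp hx))
  rw [step1, lintegral_indicator measurableSet_Ici,
    Measure.restrict_restrict measurableSet_Ici, hIci,
    ← Measure.restrict_congr_set Ioi_ae_eq_Ici]
  have hInt : IntegrableOn (fun x => Real.exp (-x) * (x - y) ^ 2) (Ioi y) := by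
    apply integrableOn_Ioi_shift
    refine IntegrableOn.congr_fun ((integrableOn_pow_mul_exp 2 one_pos).const_mul
      (Real.exp (-y))) (fun x _ => ?_) measurableSet_Ioi
    rw [neg_add, Real.exp_add]; ring
  rw [← ofReal_integral_eq_lintegral_ofReal hInt (ae_of_all _ (fun x => by positivity))]
  congr 1
  rw [integral_Ioi_shift,
    show (fun x : ℝ => Real.exp (-(x + y)) * (x + y - y) ^ 2)
      = fun x => Real.exp (-y) * (x ^ 2 * Real.exp (-(1 * x))) from funext fun x => by
        rw [neg_add, Real.exp_add]; ring,
    integral_const_mul, integral_pow_mul_exp 2 one_pos]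
  norm_num [Nat.factorial]
  ring

lemma inner2 {y : ℝ} (hy : 0 < y) :
    (∫⁻ x in Ioi (0:ℝ), ENNReal.ofReal (1 * Real.exp (-(1 * x))) *
        ENNReal.ofReal (if y ≤ x then x ^ 2 - y ^ 2 else 0))
      = ENNReal.ofReal ((2 + 2 * y) * Real.exp (-y)) := by
  have step1 : (fun x : ℝ => ENNReal.ofReal (1 * Real.exp (-(1 * x))) *
      ENNReal.ofReal (if y ≤ x then x ^ 2 - y ^ 2 else 0))
      = (Ici y).indicator (fun x => ENNReal.ofReal (Real.exp (-x) * (x ^ 2 - y ^ 2))) := by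
    funext x
    by_cases h : y ≤ x
    · simp only [indicator_of_mem (mem_Ici.2 h), if_pos h, one_mul]
      rw [← ENNReal.ofReal_mul (Real.exp_pos _).le]
    · simp [indicator_of_notMem, h, mem_Ici]
  have hIci : Ici y ∩ Ioi (0:ℝ) = Ici y :=
    inter_eq_left.mpr (fun x hx => lt_of_lt_of_le hy (mem_Ici.mp hx))
  rw [step1, lintegral_indicator measurableSet_Ici,
    Measure.restrict_restrict measurableSet_Ici, hIci,
    ← Measure.restrict_congr_set Ioi_ae_eq_Ici]
  have hInt : IntegrableOn (fun x => Real.exp (-x) * (x ^ 2 - y ^ 2)) (Ioi y) := by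
    apply integrableOn_Ioi_shift
    have hadd : IntegrableOn (fun x : ℝ => Real.exp (-y) * (x ^ 2 * Real.exp (-(1 * x)))
        + Real.exp (-y) * (2 * y) * (x ^ 1 * Real.exp (-(1 * x)))) (Ioi 0) := by
      exact ((integrableOn_pow_mul_exp 2 one_pos).const_mul (Real.exp (-y))).add
        ((integrableOn_pow_mul_exp 1 one_pos).const_mul (Real.exp (-y) * (2 * y)))
    refine IntegrableOn.congr_fun hadd (fun x _ => ?_) measurableSet_Ioi
    rw [neg_add, Real.exp_add]; ring
  rw [← ofReal_integral_eq_lintegral_ofReal hInt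
    ((ae_restrict_iff' measurableSet_Ioi).2 (ae_of_all _ (fun x hx => by
      have hx' : y < x := hx
      have : 0 ≤ x ^ 2 - y ^ 2 := by nlinarith
      positivity)))]
  congr 1
  rw [integral_Ioi_shift,
    show (fun x : ℝ => Real.exp (-(x + y)) * ((x + y) ^ 2 - y ^ 2))
      = fun x => Real.exp (-y) * (x ^ 2 * Real.exp (-(1 * x)))
        + Real.exp (-y) * (2 * y) * (x ^ 1 * Real.exp (-(1 * x))) from funext fun x => by
        rw [neg_add, Real.exp_add]; ring]
  rw [integral_add (((integrableOn_pow_mul_exp 2 one_pos).const_mul _))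
      (((integrableOn_pow_mul_exp 1 one_pos).const_mul _)),
    integral_const_mul, integral_const_mul, integral_pow_mul_exp 2 one_pos,
    integral_pow_mul_exp 1 one_pos]
  norm_num [Nat.factorial]
  ring

lemma outer1 {γ : ℝ} (hγ : 0 < γ) :
    (∫⁻ y in Ioi (0:ℝ), ENNReal.ofReal (γ⁻¹ * Real.exp (-(γ⁻¹ * y))) *
        ENNReal.ofReal (2 * Real.exp (-y))) = ENNReal.ofReal (2 / (1 + γ)) := by
  have hcpos : (0:ℝ) < γ⁻¹ + 1 := by positivity
  have heq : ∀ y ∈ Ioi (0:ℝ),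
      ENNReal.ofReal (γ⁻¹ * Real.exp (-(γ⁻¹ * y))) * ENNReal.ofReal (2 * Real.exp (-y))
      = ENNReal.ofReal ((2 * γ⁻¹) * (y ^ 0 * Real.exp (-((γ⁻¹ + 1) * y)))) := by
    intro y _
    rw [← ENNReal.ofReal_mul (by positivity)]
    congr 1
    rw [pow_zero, show -((γ⁻¹ + 1) * y) = -(γ⁻¹ * y) + -y by ring, Real.exp_add]; ring
  rw [setLIntegral_congr_fun_ae measurableSet_Ioi (ae_of_all _ heq),
    ← ofReal_integral_eq_lintegral_ofReal ((integrableOn_pow_mul_exp 0 hcpos).const_mul _)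
      (ae_of_all _ fun y => by positivity)]
  congr 1
  rw [integral_const_mul, integral_pow_mul_exp 0 hcpos]
  have h1 : (1:ℝ) + γ ≠ 0 := by positivity
  field_simp
  rw [Nat.factorial_zero, Nat.cast_one, zero_add, pow_one]
  field_simp

lemma outer2 {γ : ℝ} (hγ : 0 < γ) :
    (∫⁻ y in Ioi (0:ℝ), ENNReal.ofReal (γ⁻¹ * Real.exp (-(γ⁻¹ * y))) *
        ENNReal.ofReal ((2 + 2 * y) * Real.exp (-y)))
      = ENNReal.ofReal (2 * (1 + 2 * γ) / (1 + γ) ^ 2) := by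
  have hcpos : (0:ℝ) < γ⁻¹ + 1 := by positivity
  have heq : ∀ y ∈ Ioi (0:ℝ),
      ENNReal.ofReal (γ⁻¹ * Real.exp (-(γ⁻¹ * y))) * ENNReal.ofReal ((2 + 2 * y) * Real.exp (-y))
      = ENNReal.ofReal ((2 * γ⁻¹) * (y ^ 0 * Real.exp (-((γ⁻¹ + 1) * y)))
          + (2 * γ⁻¹) * (y ^ 1 * Real.exp (-((γ⁻¹ + 1) * y)))) := by
    intro y hy
    have hy' : (0:ℝ) < y := hy
    rw [← ENNReal.ofReal_mul (by positivity)]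
    congr 1
    rw [show -((γ⁻¹ + 1) * y) = -(γ⁻¹ * y) + -y by ring, Real.exp_add]; ring
  have hI : IntegrableOn (fun y : ℝ => 2 * γ⁻¹ * (y ^ 0 * Real.exp (-((γ⁻¹ + 1) * y)))
      + 2 * γ⁻¹ * (y ^ 1 * Real.exp (-((γ⁻¹ + 1) * y)))) (Ioi 0) := by
    exact ((integrableOn_pow_mul_exp 0 hcpos).const_mul _).add
      ((integrableOn_pow_mul_exp 1 hcpos).const_mul _)
  rw [setLIntegral_congr_fun_ae measurableSet_Ioi (ae_of_all _ heq),
    ← ofReal_integral_eq_lintegral_ofReal hI ((ae_restrict_iff' measurableSet_Ioi).2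
      (ae_of_all _ fun y hy => by
        have h0y : (0:ℝ) < y := hy
        positivity))]
  congr 1
  rw [integral_add ((integrableOn_pow_mul_exp 0 hcpos).const_mul (2 * γ⁻¹))
      ((integrableOn_pow_mul_exp 1 hcpos).const_mul (2 * γ⁻¹)),
    integral_const_mul, integral_const_mul, integral_pow_mul_exp 0 hcpos,
    integral_pow_mul_exp 1 hcpos]
  have h1 : (1:ℝ) + γ ≠ 0 := by positivity
  norm_num [Nat.factorial]
  field_simp
  ring

end ExpFadingAux

open ExpFadingAux

/-- For independent exponential fading powers (`z1` with mean 1, `z2`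
with mean `γ`), `E[(z1 − z2)²·1{z1 ≥ z2}] = 2/(1+γ)` and
`E[(z1² − z2²)·1{z1 ≥ z2}] = 2(1+2γ)/(1+γ)²`. -/
theorem exponential_fading_second_moments
    {Ω : Type*} [MeasurableSpace Ω] (μ : Measure Ω) [IsProbabilityMeasure μ]
    (z1 z2 : Ω → ℝ) (hz1m : Measurable z1) (hz2m : Measurable z2)
    (hindep : IndepFun z1 z2 μ)
    (γ : ℝ) (hγ : 0 < γ)
    (hz1law : μ.map z1 = expMeasure 1)
    (hz2law : μ.map z2 = expMeasure γ⁻¹) :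
    (∫ ω, (if z2 ω ≤ z1 ω then (z1 ω - z2 ω) ^ 2 else 0) ∂μ) = 2 / (1 + γ) ∧
    (∫ ω, (if z2 ω ≤ z1 ω then (z1 ω) ^ 2 - (z2 ω) ^ 2 else 0) ∂μ)
      = 2 * (1 + 2 * γ) / (1 + γ) ^ 2 := by
  have hle : MeasurableSet {p : ℝ × ℝ | p.2 ≤ p.1} := measurableSet_le measurable_snd measurable_fst
  constructor
  · have hfm : Measurable (fun p : ℝ × ℝ => if p.2 ≤ p.1 then (p.1 - p.2) ^ 2 else 0) :=
      Measurable.ite hle ((measurable_fst.sub measurable_snd).pow_const 2) measurable_const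
    have hred := reduce μ z1 z2 hz1m hz2m hindep γ hγ hz1law hz2law
      (fun p => if p.2 ≤ p.1 then (p.1 - p.2) ^ 2 else 0) hfm
      (fun x y _ _ => by dsimp only; split <;> positivity)
    rw [show (fun ω => if z2 ω ≤ z1 ω then (z1 ω - z2 ω) ^ 2 else 0)
        = fun ω => (fun p : ℝ × ℝ => if p.2 ≤ p.1 then (p.1 - p.2) ^ 2 else 0) (z1 ω, z2 ω)
        from rfl, hred,
      setLIntegral_congr_fun_ae measurableSet_Ioi (ae_of_all _ (fun y (hy : 0 < y) => by
        rw [inner1 hy])),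
      outer1 hγ, ENNReal.toReal_ofReal (by positivity)]
  · have hfm : Measurable (fun p : ℝ × ℝ => if p.2 ≤ p.1 then p.1 ^ 2 - p.2 ^ 2 else 0) :=
      Measurable.ite hle ((measurable_fst.pow_const 2).sub (measurable_snd.pow_const 2))
        measurable_const
    have hred := reduce μ z1 z2 hz1m hz2m hindep γ hγ hz1law hz2law
      (fun p => if p.2 ≤ p.1 then p.1 ^ 2 - p.2 ^ 2 else 0) hfm
      (fun x y hx hy => by
        dsimp only; split
        · next h => nlinarith
        · exact le_refl 0)
    rw [show (fun ω => if z2 ω ≤ z1 ω then (z1 ω) ^ 2 - (z2 ω) ^ 2 else 0)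
        = fun ω => (fun p : ℝ × ℝ => if p.2 ≤ p.1 then p.1 ^ 2 - p.2 ^ 2 else 0) (z1 ω, z2 ω)
        from rfl, hred,
      setLIntegral_congr_fun_ae measurableSet_Ioi (ae_of_all _ (fun y (hy : 0 < y) => by
        rw [inner2 hy])),
      outer2 hγ, ENNReal.toReal_ofReal (by positivity)]
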